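/- Integrated Gradients does not preserve demand individual monotonicity: for f(x_1, x_2) = x_1 x_2/(x_1 + x_2) on the positive quadrant (extended by f(0,0) = 0), f is individually monotonic with respect to x_1 on (0, ∞)², yet with baseline (0, 0) one has IG_1((3, 1), (0, 0), f) = 3/16 < 1/4 = IG_1((1, 1), (0, 0), f), even though the explicand (3, 1) is obtained from (1, 1) by increasing only the first coordinate. -/

import Mathlib

/-- The model `f(x₁, x₂) = x₁x₂/(x₁ + x₂)` for `x₁ + x₂ > 0`, extended by `f(0,0) = 0`
(in Lean, division by zero yields zero, so the formula already gives `f 0 0 = 0`). -/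
noncomputable def f (a b : ℝ) : ℝ := a * b / (a + b)

lemma deriv_f (t c : ℝ) (ht : 0 < t) (hc : 0 ≤ c) :
    deriv (fun s : ℝ => f s t) c = t ^ 2 / (c + t) ^ 2 := by
  have hne : c + t ≠ 0 := by positivity
  have h1 : HasDerivAt (fun s : ℝ => s * t) t c := by simpa using (hasDerivAt_id c).mul_const t
  have h2 : HasDerivAt (fun s : ℝ => s + t) 1 c := (hasDerivAt_id c).add_const t
  have h := h1.div h2 hne
  have hd : deriv (fun s : ℝ => f s t) c = (t * (c + t) - c * t * 1) / (c + t) ^ 2 := by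
    exact h.deriv
  rw [hd]; ring_nf

/-- Integrated Gradients does not preserve demand individual monotonicity: `f` is
individually monotonic with respect to the first feature on `(0,∞)²`, yet with baseline
`(0,0)` one has `IG₁((3,1),(0,0),f) = 3/16 < 1/4 = IG₁((1,1),(0,0),f)`, even though the
explicand `(3,1)` is obtained from `(1,1)` by increasing only the first coordinate.
Here `IG₁((x₁,x₂),(0,0),f) = (x₁ − 0) · ∫_0^1 (∂f/∂x₁)(t·x₁, t·x₂) dt`. -/
theorem ig_fails_demand_individual_monotonicity :
    (∀ a a' b : ℝ, 0 < a → 0 < a' → 0 < b → a ≤ a' → f a b ≤ f a' b) ∧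
    ((3 - 0 : ℝ) * ∫ t in (0:ℝ)..1,
        deriv (fun s : ℝ => f s (0 + t * (1 - 0))) (0 + t * (3 - 0))) = 3 / 16 ∧
    ((1 - 0 : ℝ) * ∫ t in (0:ℝ)..1,
        deriv (fun s : ℝ => f s (0 + t * (1 - 0))) (0 + t * (1 - 0))) = 1 / 4 ∧
    (3 / 16 : ℝ) < 1 / 4 := by
  refine ⟨?_, ?_, ?_, by norm_num⟩
  · intro a a' b ha ha' hb hle
    unfold f
    rw [div_le_div_iff₀ (by positivity) (by positivity)]
    nlinarith [mul_pos hb hb, sq_nonneg b]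
  · have hcongr : (∫ t in (0:ℝ)..1,
        deriv (fun s : ℝ => f s (0 + t * (1 - 0))) (0 + t * (3 - 0)))
        = ∫ t in (0:ℝ)..1, (1/16 : ℝ) := by
      apply intervalIntegral.integral_congr_ae
      filter_upwards with x hx
      rw [Set.uIoc_of_le (by norm_num : (0:ℝ) ≤ 1)] at hx
      have hx0 : 0 < x := hx.1
      rw [show (0 + x * (1 - 0)) = x by ring, show (0 + x * (3 - 0)) = 3 * x by ring,
        deriv_f x (3 * x) hx0 (by positivity)]
      field_simp
      ring
    rw [hcongr]; norm_num
  · have hcongr : (∫ t in (0:ℝ)..1,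
        deriv (fun s : ℝ => f s (0 + t * (1 - 0))) (0 + t * (1 - 0)))
        = ∫ t in (0:ℝ)..1, (1/4 : ℝ) := by
      apply intervalIntegral.integral_congr_ae
      filter_upwards with x hx
      rw [Set.uIoc_of_le (by norm_num : (0:ℝ) ≤ 1)] at hx
      have hx0 : 0 < x := hx.1
      rw [show (0 + x * (1 - 0)) = x by ring, deriv_f x x hx0 hx0.le]
      field_simp
      ring
    rw [hcongr]; norm_num
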